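/- For integers m > 1 and 0 ≤ l < m, the sum over j from 1 to m-1 of ζ^{jl}/(1 - ζ^{-j}), where ζ = e^{2πi/m} is a primitive m-th root of unity, equals (m-1)/2 - l. -/
import Mathlib


open Complex Finset

lemma aux_pair (w : ℂ) (h0 : w ≠ 0) (h1 : w ≠ 1) :
    1 / (1 - w⁻¹) + 1 / (1 - w) = 1 := by
  have h3 : w - 1 ≠ 0 := sub_ne_zero.mpr h1
  have h3' : 1 - w ≠ 0 := fun h => h3 (by linear_combination -h)
  have hrw : 1 - w⁻¹ = (w - 1) / w := by field_simp
  rw [hrw, one_div_div]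
  field_simp
  ring

lemma aux_step (a w : ℂ) (h0 : w ≠ 0) (h1 : w ≠ 1) :
    a * w / (1 - w⁻¹) = a / (1 - w⁻¹) + a * w := by
  have h3 : w - 1 ≠ 0 := sub_ne_zero.mpr h1
  have hrw : 1 - w⁻¹ = (w - 1) / w := by field_simp
  rw [hrw, div_div_eq_mul_div, div_div_eq_mul_div]
  field_simp
  ring

lemma aux_sum (m : ℕ) (hm : 1 < m) (ζ : ℂ) (hprim : IsPrimitiveRoot ζ m) :
    ∀ l, l < m → ∑ j ∈ Finset.Icc 1 (m - 1), ζ ^ (j * l) / (1 - ζ ^ (-(j : ℤ))) =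
      ((m : ℂ) - 1) / 2 - l := by
  have hm0 : (m : ℕ) ≠ 0 := by omega
  have hζ0 : ζ ≠ 0 := hprim.ne_zero hm0
  have hζm : ζ ^ m = 1 := hprim.pow_eq_one
  have hne : ∀ j ∈ Finset.Icc 1 (m - 1), ζ ^ j ≠ 1 := by
    intro j hj
    simp only [Finset.mem_Icc] at hj
    exact hprim.pow_ne_one_of_pos_of_lt (by omega) (by omega)
  intro l hl
  induction l with
  | zero =>
    have hswap : ∑ j ∈ Finset.Icc 1 (m - 1), ζ ^ (j * 0) / (1 - ζ ^ (-(j : ℤ)))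
        = ∑ j ∈ Finset.Icc 1 (m - 1), ζ ^ ((m - j) * 0) / (1 - ζ ^ (-((m - j : ℕ) : ℤ))) := by
      apply Finset.sum_nbij' (fun j => m - j) (fun j => m - j)
      · intro a ha; simp only [Finset.mem_Icc] at *; omega
      · intro a ha; simp only [Finset.mem_Icc] at *; omega
      · intro a ha; simp only [Finset.mem_Icc] at ha; omega
      · intro a ha; simp only [Finset.mem_Icc] at ha; omega
      · intro a ha
        simp only [Finset.mem_Icc] at ha
        have : m - (m - a) = a := by omega
        rw [this]
    have key : ∑ j ∈ Finset.Icc 1 (m - 1),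
        (ζ ^ (j * 0) / (1 - ζ ^ (-(j : ℤ))) + ζ ^ ((m - j) * 0) / (1 - ζ ^ (-((m - j : ℕ) : ℤ))))
        = (m : ℂ) - 1 := by
      have hpt : ∀ j ∈ Finset.Icc 1 (m - 1),
          ζ ^ (j * 0) / (1 - ζ ^ (-(j : ℤ))) + ζ ^ ((m - j) * 0) / (1 - ζ ^ (-((m - j : ℕ) : ℤ))) = 1 := by
        intro j hj
        simp only [Finset.mem_Icc] at hj
        have hmem : j ∈ Finset.Icc 1 (m - 1) := by simp only [Finset.mem_Icc]; omega
        have hw : ζ ^ j * ζ ^ (m - j) = 1 := by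
          rw [← pow_add, Nat.add_sub_cancel' (by omega)]; exact hζm
        have hinv : (ζ ^ (m - j))⁻¹ = ζ ^ j := (eq_inv_of_mul_eq_one_left hw).symm
        simp only [zpow_neg, zpow_natCast, Nat.mul_zero, pow_zero]
        rw [hinv]
        exact aux_pair (ζ ^ j) (pow_ne_zero _ hζ0) (hne j hmem)
      rw [Finset.sum_congr rfl hpt]
      simp only [Finset.sum_const, Nat.card_Icc, nsmul_eq_mul, mul_one]
      have h1 : m - 1 + 1 - 1 = m - 1 := by omega
      rw [h1, Nat.cast_sub (by omega)]
      simp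
    rw [Finset.sum_add_distrib, ← hswap] at key
    push_cast
    linear_combination key / 2
  | succ l ih =>
    have ihl := ih (by omega)
    have hx : ζ ^ (l + 1) ≠ 1 := hprim.pow_ne_one_of_pos_of_lt (by omega) hl
    have hgeom : ∑ j ∈ Finset.Icc 1 (m - 1), (ζ ^ (l + 1)) ^ j = -1 := by
      have h0 : ∑ j ∈ Finset.range m, (ζ ^ (l + 1)) ^ j = 0 := by
        rw [geom_sum_eq hx, ← pow_mul, mul_comm, pow_mul, hζm, one_pow]
        simp
      rw [Finset.range_eq_Ico, Finset.sum_eq_sum_Ico_succ_bot (by omega)] at h0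
      have hIco : Finset.Ico 1 m = Finset.Icc 1 (m - 1) := by
        rw [← Finset.Ico_add_one_right_eq_Icc]
        congr 1
        omega
      rw [hIco] at h0
      simp only [pow_zero] at h0
      linear_combination h0
    have hstep : ∀ j ∈ Finset.Icc 1 (m - 1),
        ζ ^ (j * (l + 1)) / (1 - ζ ^ (-(j : ℤ)))
          = ζ ^ (j * l) / (1 - ζ ^ (-(j : ℤ))) + (ζ ^ (l + 1)) ^ j := by
      intro j hj
      simp only [zpow_neg, zpow_natCast]
      have e1 : ζ ^ (j * (l + 1)) = ζ ^ (j * l) * ζ ^ j := by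
        rw [← pow_add]; ring_nf
      have e2 : (ζ ^ (l + 1)) ^ j = ζ ^ (j * l) * ζ ^ j := by
        rw [← pow_mul]; ring_nf
      rw [e1, e2]
      exact aux_step _ _ (pow_ne_zero _ hζ0) (hne j hj)
    rw [Finset.sum_congr rfl hstep, Finset.sum_add_distrib, ihl, hgeom]
    push_cast
    ring

/-- For integers `m > 1` and `0 ≤ l < m`, with `ζ = exp(2πi/m)`,
`∑_{j=1}^{m-1} ζ^{jl} / (1 - ζ^{-j}) = (m-1)/2 - l`. -/
theorem sum_primitive_root_fraction (m l : ℕ) (hm : 1 < m) (hl : l < m)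
    (ζ : ℂ) (hζ : ζ = Complex.exp (2 * Real.pi * Complex.I / m)) :
    ∑ j ∈ Finset.Icc 1 (m - 1), ζ ^ (j * l) / (1 - ζ ^ (-(j : ℤ))) =
      ((m : ℂ) - 1) / 2 - l := by
  have hprim : IsPrimitiveRoot ζ m := by
    rw [hζ]; exact Complex.isPrimitiveRoot_exp m (by omega)
  exact aux_sum m hm ζ hprim l hl
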